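/- For n ≥ 3, the odd unitary Steinberg group StU(2n,R,𝔏) is a perfect group. -/

import Mathlib

open MulOpposite
open scoped commutatorElement

universe u

/-- A pseudo-involution on a ring `R`: an additive map `a ↦ ā` such that `1̄` is
invertible (with explicit inverse `e = 1̄⁻¹`), `ā̄ = a` and `(ab)‾ = b̄·1̄⁻¹·ā`. -/
structure PseudoInvolution (R : Type*) [Ring R] where
  bar : R → R
  bar_add : ∀ a b : R, bar (a + b) = bar a + bar b
  e : R
  e_bar_one : e * bar 1 = 1
  bar_one_e : bar 1 * e = 1
  bar_bar : ∀ a : R, bar (bar a) = a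
  bar_mul : ∀ a b : R, bar (a * b) = bar b * e * bar a

/-- An anti-Hermitian form on a right `R`-module `V` (a right module is encoded as a
module over the opposite ring, so `u·a` is `op a • u`). -/
structure AntiHermitianForm (R : Type*) [Ring R] (pi : PseudoInvolution R)
    (V : Type*) [AddCommGroup V] [Module Rᵐᵒᵖ V] where
  B : V → V → R
  add_left : ∀ u v w : V, B (u + v) w = B u w + B v w
  add_right : ∀ u v w : V, B u (v + w) = B u v + B u w
  smul_pair : ∀ (a b : R) (u v : V), B (op a • u) (op b • v) = pi.bar a * pi.e * B u v * b
  skew : ∀ u v : V, B u v = - pi.bar (B v u)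

variable {R : Type u} [Ring R] {pi : PseudoInvolution R}
variable {V : Type u} [AddCommGroup V] [Module Rᵐᵒᵖ V]

/-- The Heisenberg group operation `(u,a) ∔ (v,b) = (u+v, a+b+B(u,v))`. -/
def hAdd (f : AntiHermitianForm R pi V) (x y : V × R) : V × R :=
  (x.1 + y.1, x.2 + y.2 + f.B x.1 y.1)

/-- The Heisenberg group inverse `∸(u,a) = (−u, −a+B(u,u))`. -/
def hInv (f : AntiHermitianForm R pi V) (x : V × R) : V × R :=
  (-x.1, -x.2 + f.B x.1 x.1)

/-- The right action of `R` on the Heisenberg group, `(u,a) ↼ b = (ub, b̄·1̄⁻¹·a·b)`. -/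
def hAct (pi : PseudoInvolution R) (x : V × R) (b : R) : V × R :=
  (op b • x.1, pi.bar b * pi.e * x.2 * b)

/-- An odd form parameter: a subgroup of the Heisenberg group, stable under the
`R`-action, lying between `𝔏_min` and `𝔏_max`. -/
structure OddFormParameter (f : AntiHermitianForm R pi V) where
  carrier : Set (V × R)
  add_mem : ∀ x y : V × R, x ∈ carrier → y ∈ carrier → hAdd f x y ∈ carrier
  inv_mem : ∀ x : V × R, x ∈ carrier → hInv f x ∈ carrier
  act_mem : ∀ x : V × R, x ∈ carrier → ∀ b : R, hAct pi x b ∈ carrier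
  min_le : ∀ a : R, ((0 : V), a + pi.bar a) ∈ carrier
  le_max : ∀ x : V × R, x ∈ carrier → x.2 = pi.bar x.2 + f.B x.1 x.1

/-- The index set `Ω = {1,…,n,−n,…,−1}` (for `n = ∞` all nonzero integers). -/
def Omega (n : ℕ∞) : Set ℤ := {i : ℤ | i ≠ 0 ∧ (i.natAbs : ℕ∞) ≤ n}

/-- `ε_i = 1̄⁻¹` for `i > 0` and `ε_i = −1` for `i < 0`. -/
def epsI (pi : PseudoInvolution R) (i : ℤ) : R := if 0 < i then pi.e else -1

/-- A family of "Steinberg generators" in a group `G` satisfying Petrov's relations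
R0–R9 of the odd unitary Steinberg group `StU(2n, R, 𝔏)`. -/
structure StURels (n : ℕ∞) (f : AntiHermitianForm R pi V) (L : OddFormParameter f)
    (G : Type*) [Group G] where
  X : ℤ → ℤ → R → G
  Y : ℤ → V × R → G
  rel0 : ∀ i j : ℤ, i ∈ Omega n → j ∈ Omega n → j ≠ i → j ≠ -i → ∀ a : R,
    X i j a = X (-j) (-i) (epsI pi (-j) * pi.bar a * epsI pi i)
  rel1 : ∀ i j : ℤ, i ∈ Omega n → j ∈ Omega n → j ≠ i → j ≠ -i → ∀ a b : R,
    X i j a * X i j b = X i j (a + b)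
  rel2 : ∀ i : ℤ, i ∈ Omega n → ∀ ξ ζ : V × R, ξ ∈ L.carrier → ζ ∈ L.carrier →
    Y i ξ * Y i ζ = Y i (hAdd f ξ ζ)
  rel3 : ∀ i j h k : ℤ, i ∈ Omega n → j ∈ Omega n → h ∈ Omega n → k ∈ Omega n →
    j ≠ i → j ≠ -i → k ≠ h → k ≠ -h → h ≠ j → h ≠ -i → k ≠ i → k ≠ -j →
    ∀ a b : R, ⁅X i j a, X h k b⁆ = 1
  rel4 : ∀ i j k : ℤ, i ∈ Omega n → j ∈ Omega n → k ∈ Omega n → k ≠ j → k ≠ -j →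
    j ≠ -i → k ≠ i → ∀ ξ : V × R, ξ ∈ L.carrier → ∀ a : R, ⁅Y i ξ, X j k a⁆ = 1
  rel5 : ∀ i j k : ℤ, i ∈ Omega n → j ∈ Omega n → k ∈ Omega n →
    j ≠ i → j ≠ -i → k ≠ j → k ≠ -j → k ≠ i → k ≠ -i →
    ∀ a b : R, ⁅X i j a, X j k b⁆ = X i k (a * b)
  rel6 : ∀ i j : ℤ, i ∈ Omega n → j ∈ Omega n → j ≠ i → j ≠ -i →
    ∀ (u : V) (a : R) (v : V) (b : R), (u, a) ∈ L.carrier → (v, b) ∈ L.carrier →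
    ⁅Y i (u, a), Y j (v, b)⁆ = X i (-j) (epsI pi i * f.B u v)
  rel7 : ∀ i : ℤ, i ∈ Omega n →
    ∀ (u : V) (a : R) (v : V) (b : R), (u, a) ∈ L.carrier → (v, b) ∈ L.carrier →
    ⁅Y i (u, a), Y i (v, b)⁆ = Y i (0, f.B u v - f.B v u)
  rel8 : ∀ i j : ℤ, i ∈ Omega n → j ∈ Omega n → j ≠ i → j ≠ -i →
    ∀ (u : V) (a : R), (u, a) ∈ L.carrier → ∀ b : R,
    ⁅Y i (u, a), X (-i) j b⁆ = X i j (epsI pi i * a * b) * Y (-j) (hAct pi (u, -pi.bar a) b)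
  rel9 : ∀ i j : ℤ, i ∈ Omega n → j ∈ Omega n → j ≠ i → j ≠ -i → ∀ a b : R,
    ⁅X i j a, X j (-i) b⁆ =
      Y i (0, -(epsI pi (-i)) * pi.bar 1 * a * b + pi.bar b * pi.e * pi.bar a * epsI pi i)

/-- `(G, S)` *is* the odd unitary Steinberg group `StU(2n, R, 𝔏)`: it has the universal
property of the presentation, i.e. for every group `H` with Steinberg generators
satisfying R0–R9 there is a unique homomorphism `G →* H` matching the generators. -/
def IsStU {n : ℕ∞} {f : AntiHermitianForm R pi V} {L : OddFormParameter f}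
    {G : Type u} [Group G] (S : StURels n f L G) : Prop :=
  ∀ (H : Type u) [Group H], ∀ T : StURels n f L H,
    ∃! φ : G →* H,
      (∀ i j : ℤ, i ∈ Omega n → j ∈ Omega n → j ≠ i → j ≠ -i → ∀ a : R,
        φ (S.X i j a) = T.X i j a) ∧
      (∀ i : ℤ, i ∈ Omega n → ∀ ξ : V × R, ξ ∈ L.carrier → φ (S.Y i ξ) = T.Y i ξ)


section Aux

/-- Push a family of Steinberg generators forward along a group homomorphism. -/
def StURels.map {n : ℕ∞} {f : AntiHermitianForm R pi V} {L : OddFormParameter f}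
    {G : Type*} [Group G] {H : Type*} [Group H] (S : StURels n f L G) (φ : G →* H) :
    StURels n f L H where
  X i j a := φ (S.X i j a)
  Y i ξ := φ (S.Y i ξ)
  rel0 i j hi hj h1 h2 a := congrArg φ (S.rel0 i j hi hj h1 h2 a)
  rel1 i j hi hj h1 h2 a b := by rw [← map_mul, S.rel1 i j hi hj h1 h2 a b]
  rel2 i hi ξ ζ hξ hζ := by rw [← map_mul, S.rel2 i hi ξ ζ hξ hζ]
  rel3 i j h k hi hj hh hk a1 a2 a3 a4 a5 a6 a7 a8 a b := by
    rw [← map_commutatorElement, S.rel3 i j h k hi hj hh hk a1 a2 a3 a4 a5 a6 a7 a8 a b,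
      map_one]
  rel4 i j k hi hj hk a1 a2 a3 a4 ξ hξ a := by
    rw [← map_commutatorElement, S.rel4 i j k hi hj hk a1 a2 a3 a4 ξ hξ a, map_one]
  rel5 i j k hi hj hk a1 a2 a3 a4 a5 a6 a b := by
    rw [← map_commutatorElement, S.rel5 i j k hi hj hk a1 a2 a3 a4 a5 a6 a b]
  rel6 i j hi hj h1 h2 u a v b hu hv := by
    rw [← map_commutatorElement, S.rel6 i j hi hj h1 h2 u a v b hu hv]
  rel7 i hi u a v b hu hv := by
    rw [← map_commutatorElement, S.rel7 i hi u a v b hu hv]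
  rel8 i j hi hj h1 h2 u a hu b := by
    rw [← map_commutatorElement, S.rel8 i j hi hj h1 h2 u a hu b, map_mul]
  rel9 i j hi hj h1 h2 a b := by
    rw [← map_commutatorElement, S.rel9 i j hi hj h1 h2 a b]

theorem PseudoInvolution.bar_zero (pi : PseudoInvolution R) : pi.bar 0 = 0 := by
  have := pi.bar_add 0 0
  simpa using this.symm

theorem PseudoInvolution.bar_neg (pi : PseudoInvolution R) (a : R) :
    pi.bar (-a) = -pi.bar a := by
  have h := pi.bar_add (-a) a
  simp only [neg_add_cancel, pi.bar_zero] at h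
  exact eq_neg_of_add_eq_zero_left h.symm

theorem mem_Omega_of_small {n : ℕ∞} (hn : 3 ≤ n) {h : ℤ} (hh : h = 1 ∨ h = 2 ∨ h = 3) :
    h ∈ Omega n := by
  constructor
  · omega
  · refine le_trans ?_ hn
    rcases hh with rfl | rfl | rfl <;> norm_num

theorem neg_mem_Omega {n : ℕ∞} {i : ℤ} (hi : i ∈ Omega n) : -i ∈ Omega n := by
  obtain ⟨h1, h2⟩ := hi
  exact ⟨by omega, by rwa [Int.natAbs_neg]⟩

theorem exists_third (i j : ℤ) :
    ∃ h : ℤ, (h = 1 ∨ h = 2 ∨ h = 3) ∧ h ≠ i ∧ h ≠ -i ∧ h ≠ j ∧ h ≠ -j := by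
  by_cases h1 : i.natAbs ≠ 1 ∧ j.natAbs ≠ 1
  · exact ⟨1, by omega, by omega, by omega, by omega, by omega⟩
  by_cases h2 : i.natAbs ≠ 2 ∧ j.natAbs ≠ 2
  · exact ⟨2, by omega, by omega, by omega, by omega, by omega⟩
  · exact ⟨3, by omega, by omega, by omega, by omega, by omega⟩

end Aux

/-- For `n ≥ 3` (including `n = ∞`) the odd unitary Steinberg group
`StU(2n, R, 𝔏)` is perfect. -/
theorem stU_perfect (f : AntiHermitianForm R pi V) (L : OddFormParameter f)
    (n : ℕ∞) (hn : 3 ≤ n)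
    {G : Type u} [Group G] (S : StURels n f L G) (hS : IsStU S) :
    commutator G = ⊤ := by
  -- Work in the abelianization.
  set A := Abelianization G with hA
  let π : G →* A := Abelianization.of
  have hcomm : ∀ x y : A, ⁅x, y⁆ = 1 := fun x y =>
    commutatorElement_eq_one_iff_commute.mpr (mul_comm x y)
  -- Every X-generator dies in the abelianization.
  have hXone : ∀ i j : ℤ, i ∈ Omega n → j ∈ Omega n → j ≠ i → j ≠ -i → ∀ a : R,
      π (S.X i j a) = 1 := by
    intro i j hi hj hji hjni a
    obtain ⟨h, hh, h1, h2, h3, h4⟩ := exists_third i j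
    have hhΩ := mem_Omega_of_small hn hh
    have key := S.rel5 i h j hi hhΩ hj h1 h2 (Ne.symm h3) (by omega) hji hjni a 1
    calc π (S.X i j a) = π (S.X i j (a * 1)) := by rw [mul_one]
      _ = π ⁅S.X i h a, S.X h j 1⁆ := by rw [key]
      _ = ⁅π (S.X i h a), π (S.X h j 1)⁆ := map_commutatorElement π _ _
      _ = 1 := hcomm _ _
  -- Every Y-generator dies in the abelianization.
  have hYone : ∀ k : ℤ, k ∈ Omega n → ∀ ζ : V × R, ζ ∈ L.carrier → π (S.Y k ζ) = 1 := by
    intro k hk ζ hζ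
    obtain ⟨v, c⟩ := ζ
    -- the element (v, -c + B v v) lies in L
    have hmem : ((v, -c + f.B v v) : V × R) ∈ L.carrier := by
      have h := L.act_mem _ (L.inv_mem (v, c) hζ) (-1)
      have heq : hAct pi (hInv f (v, c)) (-1) = (v, -c + f.B v v) := by
        simp [hAct, hInv, pi.bar_neg, op_neg, op_one, pi.bar_one_e, mul_assoc,
          neg_mul, mul_neg]
      rwa [heq] at h
    obtain ⟨i, hi, hi1, hi2, _, _⟩ := exists_third k k
    have hiΩ := mem_Omega_of_small hn hi
    have hnkΩ : -k ∈ Omega n := neg_mem_Omega hk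
    have key := S.rel8 i (-k) hiΩ hnkΩ (by omega) (by omega) v (-c + f.B v v) hmem 1
    -- compute hAct pi (v, -(bar (-c + B v v))) 1 = (v, c)
    have hbar : -(pi.bar (-c + f.B v v)) = c := by
      have hle := L.le_max (v, c) hζ
      have hskew : f.B v v = -pi.bar (f.B v v) := f.skew v v
      have : pi.bar (-c + f.B v v) = -pi.bar c + pi.bar (f.B v v) := by
        rw [pi.bar_add, pi.bar_neg]
      simp only at hle
      have hbb : pi.bar (f.B v v) = -f.B v v := by
        conv_lhs => rw [hskew]
        rw [pi.bar_neg, pi.bar_bar]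
      rw [this, hbb]
      conv_rhs => rw [hle]
      abel
    have hact : hAct pi (v, -pi.bar (-c + f.B v v)) 1 = ((v, c) : V × R) := by
      simp [hAct, pi.bar_one_e, hbar]
    rw [hact] at key
    have hXz : π (S.X i (-k) (epsI pi i * (-c + f.B v v) * 1)) = 1 :=
      hXone i (-k) hiΩ hnkΩ (by omega) (by omega) _
    have := congrArg π key
    rw [map_commutatorElement, map_mul, hXz, one_mul, hcomm] at this
    rw [neg_neg] at this
    exact this.symm
  -- Use the universal property with the pushed-forward relations.
  obtain ⟨φ, hφ, huniq⟩ := hS A (S.map π)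
  have hπ : π = φ := huniq π ⟨fun i j _ _ _ _ a => rfl, fun i _ ξ _ => rfl⟩
  have h1 : (1 : G →* A) = φ :=
    huniq 1 ⟨fun i j hi hj hji hjni a => (hXone i j hi hj hji hjni a).symm,
      fun i hi ξ hξ => (hYone i hi ξ hξ).symm⟩
  have hπ1 : ∀ x : G, π x = 1 := by
    intro x
    rw [hπ, ← h1]; rfl
  -- conclude
  ext x
  simp only [Subgroup.mem_top, iff_true]
  exact (QuotientGroup.eq_one_iff x).mp (hπ1 x)
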